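/- Let G = (V,E) be a finite simple graph, v a vertex of G, E_v ⊆ E the set of edges containing v, and E' = E \ E_v. If |E_v| ≤ 2, then the generic stress numbers satisfy s(E') = s(E). If |E_v| ≥ 3, then s(E) − (|E_v| − 2) ≤ s(E') ≤ s(E). -/

import Mathlib

noncomputable section

open Classical in
/-- The edge vector of the pair `(i, j)` under the realization `p`: the function `V → ℝ × ℝ`
whose value is `p i - p j` at `i`, `p j - p i` at `j`, and `0` elsewhere. -/
def edgeVec {V : Type*} (p : V → ℝ × ℝ) (i j : V) : V → ℝ × ℝ :=
  fun v => if v = i then p i - p j else if v = j then p j - p i else 0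

/-- The set of edge vectors of a set `F` of (potential) edges under the realization `p`. -/
def edgeVecs {V : Type*} (p : V → ℝ × ℝ) (F : Set (Sym2 V)) : Set (V → ℝ × ℝ) :=
  {x | ∃ i j, s(i, j) ∈ F ∧ x = edgeVec p i j}

/-- The rank of the edge vectors of `F` under the realization `p`. -/
def rankOf {V : Type*} (p : V → ℝ × ℝ) (F : Set (Sym2 V)) : ℕ :=
  Module.finrank ℝ (Submodule.span ℝ (edgeVecs p F))

/-- The generic rank of a set of edges: the maximum over all realizations `p` of the rank. -/
def genRankSet {V : Type*} (F : Set (Sym2 V)) : ℕ :=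
  ⨆ p : V → ℝ × ℝ, rankOf p F

/-- The generic rank `r(G)` of a graph. -/
def genRank {V : Type*} (G : SimpleGraph V) : ℕ := genRankSet G.edgeSet

/-- The stress number `s_p(F)` of a set of edges under the realization `p`
(the dimension of the space of resolvable stresses). -/
def stressNum {V : Type*} (p : V → ℝ × ℝ) (F : Set (Sym2 V)) : ℕ :=
  F.ncard - rankOf p F

/-- The generic stress number `s(F)` of a set of edges. -/
def genStressSet {V : Type*} (F : Set (Sym2 V)) : ℕ := F.ncard - genRankSet F

/-- The generic stress number `s(G)` of a graph. -/
def genStress {V : Type*} (G : SimpleGraph V) : ℕ := G.edgeSet.ncard - genRank G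

/-- A planar configuration is in general position if it is injective and no three distinct
vertices have collinear images. -/
def GeneralPosition {V : Type*} (p : V → ℝ × ℝ) : Prop :=
  Function.Injective p ∧
    ∀ i j k : V, i ≠ j → j ≠ k → i ≠ k →
      ¬ Collinear ℝ ({p i, p j, p k} : Set (ℝ × ℝ))

/-- `W_U`: the subspace of functions `V → ℝ × ℝ` vanishing at every vertex outside `U`. -/
def vanishOn {V : Type*} (U : Set V) : Submodule ℝ (V → ℝ × ℝ) where
  carrier := {f | ∀ v ∉ U, f v = 0}
  zero_mem' := fun v _ => rfl
  add_mem' := by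
    intro a b ha hb v hv
    simp [Pi.add_apply, ha v hv, hb v hv]
  smul_mem' := by
    intro c f hf v hv
    simp [Pi.smul_apply, hf v hv]

end

set_option linter.unusedSectionVars false

section Aux

variable {V : Type*}

open Classical in
lemma edgeVec_apply (p : V → ℝ × ℝ) (i j w : V) :
    edgeVec p i j w = if w = i then p i - p j else if w = j then p j - p i else 0 := rfl

lemma edgeVec_self (p : V → ℝ × ℝ) (i j : V) : edgeVec p i j i = p i - p j := by
  rw [edgeVec_apply, if_pos rfl]

lemma edgeVec_snd (p : V → ℝ × ℝ) (i j : V) : edgeVec p i j j = p j - p i := by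
  by_cases h : j = i
  · subst h; rw [edgeVec_apply, if_pos rfl]
  · rw [edgeVec_apply, if_neg h, if_pos rfl]

lemma edgeVec_other (p : V → ℝ × ℝ) {i j w : V} (hi : w ≠ i) (hj : w ≠ j) :
    edgeVec p i j w = 0 := by
  rw [edgeVec_apply, if_neg hi, if_neg hj]

lemma edgeVec_swap (p : V → ℝ × ℝ) (i j : V) : edgeVec p j i = edgeVec p i j := by
  funext w
  by_cases hi : w = i
  · subst hi; rw [edgeVec_snd, edgeVec_self]
  · by_cases hj : w = j
    · subst hj; rw [edgeVec_self, edgeVec_snd]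
    · rw [edgeVec_other p hj hi, edgeVec_other p hi hj]

lemma edgeVec_congr {p p' : V → ℝ × ℝ} {i j : V} (hi : p i = p' i) (hj : p j = p' j) :
    edgeVec p i j = edgeVec p' i j := by
  funext w
  rw [edgeVec_apply, edgeVec_apply, hi, hj]

lemma edgeVec_add_smul (p q : V → ℝ × ℝ) (s : ℝ) (i j : V) :
    edgeVec (p + s • q) i j = edgeVec p i j + s • edgeVec q i j := by
  funext w
  simp only [edgeVec_apply, Pi.add_apply, Pi.smul_apply]
  by_cases hi : w = i
  · simp only [if_pos hi]
    simp [smul_sub]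
    abel
  · by_cases hj : w = j
    · simp only [if_neg hi, if_pos hj]
      simp [smul_sub]
      abel
    · simp [if_neg hi, if_neg hj]

end Aux

section Aux2

variable {V : Type*}

/-- The edge vector as a function on `Sym2 V`. -/
noncomputable def edgeVecSym (p : V → ℝ × ℝ) : Sym2 V → (V → ℝ × ℝ) :=
  Sym2.lift ⟨fun i j => edgeVec p i j, fun i j => edgeVec_swap p j i⟩

lemma edgeVecSym_mk (p : V → ℝ × ℝ) (i j : V) : edgeVecSym p s(i, j) = edgeVec p i j := rfl

lemma edgeVecs_eq_image (p : V → ℝ × ℝ) (F : Set (Sym2 V)) :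
    edgeVecs p F = edgeVecSym p '' F := by
  ext x
  constructor
  · rintro ⟨i, j, hij, rfl⟩
    exact ⟨s(i, j), hij, rfl⟩
  · rintro ⟨e, he, rfl⟩
    induction e using Sym2.ind with
    | _ i j => exact ⟨i, j, he, rfl⟩

lemma edgeVecs_mono (p : V → ℝ × ℝ) {F F' : Set (Sym2 V)} (h : F ⊆ F') :
    edgeVecs p F ⊆ edgeVecs p F' := by
  rw [edgeVecs_eq_image, edgeVecs_eq_image]
  exact Set.image_mono h

lemma edgeVecs_union (p : V → ℝ × ℝ) (F F' : Set (Sym2 V)) :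
    edgeVecs p (F ∪ F') = edgeVecs p F ∪ edgeVecs p F' := by
  simp [edgeVecs_eq_image, Set.image_union]

variable [Fintype V]

lemma rankOf_mono (p : V → ℝ × ℝ) {F F' : Set (Sym2 V)} (h : F ⊆ F') :
    rankOf p F ≤ rankOf p F' :=
  Submodule.finrank_mono (Submodule.span_mono (edgeVecs_mono p h))

lemma rankOf_le_ncard (p : V → ℝ × ℝ) (F : Set (Sym2 V)) : rankOf p F ≤ F.ncard := by
  have hfin : F.Finite := Set.toFinite F
  rw [rankOf, edgeVecs_eq_image]
  have : Fintype ↥(edgeVecSym p '' F) := (hfin.image _).fintype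
  calc Module.finrank ℝ (Submodule.span ℝ (edgeVecSym p '' F))
      ≤ (edgeVecSym p '' F).toFinset.card := finrank_span_le_card _
    _ = (edgeVecSym p '' F).ncard := (Set.ncard_eq_toFinset_card' _).symm
    _ ≤ F.ncard := Set.ncard_image_le hfin

lemma rankOf_union_le (p : V → ℝ × ℝ) (F F' : Set (Sym2 V)) :
    rankOf p (F ∪ F') ≤ rankOf p F + rankOf p F' := by
  have h := Submodule.finrank_sup_add_finrank_inf_eq
    (Submodule.span ℝ (edgeVecs p F)) (Submodule.span ℝ (edgeVecs p F'))
  rw [rankOf, rankOf, rankOf, edgeVecs_union, Submodule.span_union]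
  omega

lemma bddAbove_rankOf (F : Set (Sym2 V)) :
    BddAbove (Set.range fun p : V → ℝ × ℝ => rankOf p F) := by
  refine ⟨Module.finrank ℝ (V → ℝ × ℝ), ?_⟩
  rintro x ⟨p, rfl⟩
  exact Submodule.finrank_le _

lemma rankOf_le_genRankSet (p : V → ℝ × ℝ) (F : Set (Sym2 V)) :
    rankOf p F ≤ genRankSet F :=
  le_ciSup (bddAbove_rankOf F) p

lemma genRankSet_le {F : Set (Sym2 V)} {c : ℕ} (h : ∀ p : V → ℝ × ℝ, rankOf p F ≤ c) :
    genRankSet F ≤ c :=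
  ciSup_le h

lemma exists_rankOf_eq_genRankSet (F : Set (Sym2 V)) :
    ∃ p : V → ℝ × ℝ, rankOf p F = genRankSet F := by
  have h1 : (Set.range fun p : V → ℝ × ℝ => rankOf p F).Nonempty := ⟨_, ⟨fun _ => 0, rfl⟩⟩
  have h2 := Nat.sSup_mem h1 (bddAbove_rankOf F)
  obtain ⟨p, hp⟩ := h2
  exact ⟨p, hp⟩

lemma genRankSet_le_ncard (F : Set (Sym2 V)) : genRankSet F ≤ F.ncard :=
  genRankSet_le fun p => rankOf_le_ncard p F

lemma genRankSet_mono {F F' : Set (Sym2 V)} (h : F ⊆ F') : genRankSet F ≤ genRankSet F' :=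
  genRankSet_le fun p => (rankOf_mono p h).trans (rankOf_le_genRankSet p F')

lemma genRankSet_union_le (F F' : Set (Sym2 V)) :
    genRankSet (F ∪ F') ≤ genRankSet F + F'.ncard :=
  genRankSet_le fun p => (rankOf_union_le p F F').trans
    (add_le_add (rankOf_le_genRankSet p F) (rankOf_le_ncard p F'))

end Aux2

section Gram

variable {V : Type*} [Fintype V]

/-- The standard inner product on `V → ℝ × ℝ` as a bilinear map. -/
noncomputable def ipB : (V → ℝ × ℝ) →ₗ[ℝ] (V → ℝ × ℝ) →ₗ[ℝ] ℝ :=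
  LinearMap.mk₂ ℝ (fun f g => ∑ w : V, ((f w).1 * (g w).1 + (f w).2 * (g w).2))
    (fun f f' g => by
      rw [← Finset.sum_add_distrib]
      refine Finset.sum_congr rfl fun w _ => ?_
      simp only [Pi.add_apply, Prod.fst_add, Prod.snd_add]
      ring)
    (fun c f g => by
      simp only [Pi.smul_apply, Prod.smul_fst, Prod.smul_snd, smul_eq_mul, Finset.mul_sum]
      refine Finset.sum_congr rfl fun w _ => ?_
      ring)
    (fun f g g' => by
      rw [← Finset.sum_add_distrib]
      refine Finset.sum_congr rfl fun w _ => ?_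
      simp only [Pi.add_apply, Prod.fst_add, Prod.snd_add]
      ring)
    (fun c f g => by
      simp only [Pi.smul_apply, Prod.smul_fst, Prod.smul_snd, smul_eq_mul, Finset.mul_sum]
      refine Finset.sum_congr rfl fun w _ => ?_
      ring)

lemma ipB_apply (f g : V → ℝ × ℝ) :
    ipB f g = ∑ w : V, ((f w).1 * (g w).1 + (f w).2 * (g w).2) := rfl

lemma ipB_comm (f g : V → ℝ × ℝ) : ipB f g = ipB g f := by
  rw [ipB_apply, ipB_apply]
  exact Finset.sum_congr rfl fun w _ => by ring

lemma ipB_self_eq_zero {f : V → ℝ × ℝ} (h : ipB f f = 0) : f = 0 := by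
  have hterm : ∀ w ∈ Finset.univ, (0:ℝ) ≤ (f w).1 * (f w).1 + (f w).2 * (f w).2 :=
    fun w _ => by nlinarith [sq_nonneg (f w).1, sq_nonneg (f w).2]
  have h0 : ∀ w ∈ Finset.univ, (f w).1 * (f w).1 + (f w).2 * (f w).2 = 0 :=
    (Finset.sum_eq_zero_iff_of_nonneg hterm).mp h
  funext w
  have := h0 w (Finset.mem_univ w)
  have h1 : (f w).1 = 0 := by nlinarith [sq_nonneg (f w).1, sq_nonneg (f w).2]
  have h2 : (f w).2 = 0 := by nlinarith [sq_nonneg (f w).1, sq_nonneg (f w).2]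
  exact Prod.ext h1 h2

/-- Gram determinant criterion for linear independence. -/
lemma gram_det_ne_zero_iff {ι : Type*} [Fintype ι] [DecidableEq ι] (w : ι → V → ℝ × ℝ) :
    (Matrix.of fun k l => ipB (w k) (w l)).det ≠ 0 ↔ LinearIndependent ℝ w := by
  have key : ∀ c : ι → ℝ, ∀ l, (Matrix.of fun k l => ipB (w k) (w l)).mulVec c l
      = ipB (w l) (∑ k : ι, c k • w k) := by
    intro c l
    rw [map_sum]
    simp [Matrix.mulVec, dotProduct, mul_comm]
  constructor
  · intro hdet
    rw [Fintype.linearIndependent_iff]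
    intro c hc k
    by_contra hk
    have hc0 : c ≠ 0 := fun h => hk (by rw [h]; rfl)
    apply hdet
    rw [← Matrix.exists_mulVec_eq_zero_iff]
    refine ⟨c, hc0, ?_⟩
    funext l
    rw [key c l, hc, map_zero]
    rfl
  · intro hind hdet
    obtain ⟨c, hc0, hc⟩ := Matrix.exists_mulVec_eq_zero_iff.mpr hdet
    have hl : ∀ l, ipB (w l) (∑ k : ι, c k • w k) = 0 := by
      intro l
      have := congrFun hc l
      rw [key c l] at this
      simpa using this
    have hz : ipB (∑ k : ι, c k • w k) (∑ k : ι, c k • w k) = 0 := by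
      rw [map_sum]
      refine Finset.sum_eq_zero fun l _ => ?_
      rw [map_smul, smul_eq_mul, ipB_comm, hl l, mul_zero]
    have hzero : (∑ k : ι, c k • w k) = 0 := ipB_self_eq_zero hz
    rw [Fintype.linearIndependent_iff] at hind
    exact hc0 (funext fun k => hind c hzero k)

end Gram

section Perturb

open Polynomial in
/-- There is a realization attaining the generic rank of `F` which moreover separates
two given distinct vertices. -/
lemma exists_good_realization {V : Type*} [Fintype V] (F : Set (Sym2 V)) (u1 u2 : V)
    (h12 : u1 ≠ u2) :
    ∃ p : V → ℝ × ℝ, genRankSet F ≤ rankOf p F ∧ p u1 ≠ p u2 := by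
  classical
  obtain ⟨p0, hp0⟩ := exists_rankOf_eq_genRankSet F
  obtain ⟨t, htsub, htspan, htind⟩ := exists_linearIndependent ℝ (edgeVecs p0 F)
  have htfin : t.Finite := htind.finite
  haveI : Fintype t := htfin.fintype
  have hcard : t.toFinset.card = genRankSet F := by
    rw [← hp0, rankOf, ← htspan, finrank_span_set_eq_card htind]
  have hsel : ∀ x : t, ∃ i j, s(i, j) ∈ F ∧ (x : V → ℝ × ℝ) = edgeVec p0 i j :=
    fun x => htsub x.2
  choose I J hIJ hvec using hsel
  set q : V → ℝ × ℝ := fun w => if w = u1 then (1, 0) else 0 with hq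
  set a : t → V → ℝ × ℝ := fun k => edgeVec p0 (I k) (J k) with ha
  set b : t → V → ℝ × ℝ := fun k => edgeVec q (I k) (J k) with hb
  set Gp : Matrix t t (Polynomial ℝ) := Matrix.of fun k l =>
    C (ipB (a k) (a l)) + C (ipB (a k) (b l) + ipB (b k) (a l)) * X
      + C (ipB (b k) (b l)) * X ^ 2 with hGp
  have heval : ∀ s : ℝ, Gp.map (eval s) =
      Matrix.of fun k l => ipB (a k + s • b k) (a l + s • b l) := by
    intro s
    ext k l
    simp only [hGp, Matrix.map_apply, Matrix.of_apply, eval_add, eval_mul, eval_C, eval_X,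
      eval_pow, map_add, map_smul, LinearMap.add_apply, LinearMap.smul_apply, smul_eq_mul]
    ring
  have hmap : ∀ s : ℝ, eval s Gp.det = (Gp.map (eval s)).det := fun s => by
    simpa [RingHom.mapMatrix_apply, Polynomial.coe_evalRingHom] using
      RingHom.map_det (evalRingHom s) Gp
  have hdet0 : eval 0 Gp.det ≠ 0 := by
    have heq : Gp.map (eval (0:ℝ)) =
        Matrix.of fun k l : t => ipB (k : V → ℝ × ℝ) (l : V → ℝ × ℝ) := by
      rw [heval 0]
      ext k l
      rw [Matrix.of_apply, Matrix.of_apply, zero_smul, add_zero, zero_smul, add_zero,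
        hvec k, hvec l]
    have hne : (Matrix.of fun k l : t => ipB (k : V → ℝ × ℝ) (l : V → ℝ × ℝ)).det ≠ 0 :=
      (gram_det_ne_zero_iff _).mpr htind
    rw [hmap 0, heq]
    exact hne
  have hGpne : Gp.det ≠ 0 := fun h => hdet0 (by rw [h, eval_zero])
  have hroots : {s : ℝ | (Gp.det).IsRoot s}.Finite := Polynomial.finite_setOf_isRoot hGpne
  have hbad2 : {s : ℝ | (p0 + s • q) u1 = (p0 + s • q) u2}.Finite := by
    apply Set.Finite.subset (Set.finite_singleton ((p0 u2).1 - (p0 u1).1))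
    intro s hs
    simp only [Set.mem_setOf_eq, Pi.add_apply, Pi.smul_apply] at hs
    have h1 : q u1 = (1, 0) := if_pos rfl
    have h2 : q u2 = 0 := if_neg h12.symm
    rw [h1, h2, smul_zero, add_zero] at hs
    have := congrArg Prod.fst hs
    simp only [Prod.fst_add, Prod.smul_fst, smul_eq_mul, mul_one] at this
    simp only [Set.mem_singleton_iff]
    linarith
  obtain ⟨s, hs⟩ := ((hroots.union hbad2).infinite_compl).nonempty
  simp only [Set.mem_compl_iff, Set.mem_union, not_or, Set.mem_setOf_eq] at hs
  refine ⟨p0 + s • q, ?_, hs.2⟩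
  -- the perturbed vectors
  set y : t → V → ℝ × ℝ := fun k => edgeVec (p0 + s • q) (I k) (J k) with hy
  have hy' : ∀ k, y k = a k + s • b k := fun k => edgeVec_add_smul p0 q s (I k) (J k)
  have hdets : (Matrix.of fun k l => ipB (y k) (y l)).det ≠ 0 := by
    have : (Matrix.of fun k l => ipB (y k) (y l)) = Gp.map (eval s) := by
      rw [heval s]
      ext k l
      rw [Matrix.of_apply, Matrix.of_apply, hy' k, hy' l]
    rw [this, ← hmap s]
    exact fun h => hs.1 h
  have hindy : LinearIndependent ℝ y := (gram_det_ne_zero_iff y).mp hdets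
  have hle : Submodule.span ℝ (Set.range y) ≤
      Submodule.span ℝ (edgeVecs (p0 + s • q) F) := by
    apply Submodule.span_le.mpr
    rintro x ⟨k, rfl⟩
    exact Submodule.subset_span ⟨I k, J k, hIJ k, rfl⟩
  calc genRankSet F = t.toFinset.card := hcard.symm
    _ = Fintype.card t := Set.toFinset_card t
    _ = Module.finrank ℝ (Submodule.span ℝ (Set.range y)) := (finrank_span_eq_card hindy).symm
    _ ≤ rankOf (p0 + s • q) F := Submodule.finrank_mono hle

end Perturb

section Boost

variable {V : Type*} [Fintype V]

lemma apply_eq_zero_of_mem_span {p : V → ℝ × ℝ} {F' : Set (Sym2 V)} {v : V}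
    (hF' : ∀ e ∈ F', v ∉ e) {f : V → ℝ × ℝ}
    (hf : f ∈ Submodule.span ℝ (edgeVecs p F')) : f v = 0 := by
  induction hf using Submodule.span_induction with
  | mem x hx =>
    obtain ⟨i, j, hij, rfl⟩ := hx
    refine edgeVec_other p (fun h => hF' _ hij ?_) (fun h => hF' _ hij ?_)
    · exact Sym2.mem_iff.mpr (Or.inl h)
    · exact Sym2.mem_iff.mpr (Or.inr h)
  | zero => rfl
  | add x y _ _ hx hy => simp [Pi.add_apply, hx, hy]
  | smul c x _ hx => simp [Pi.smul_apply, hx]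

lemma rank_boost_two {p : V → ℝ × ℝ} {F F' : Set (Sym2 V)} {v u1 u2 : V}
    (hsub : F' ⊆ F) (hF' : ∀ e ∈ F', v ∉ e)
    (h1 : s(v, u1) ∈ F) (h2 : s(v, u2) ∈ F)
    (hind : ∀ c d : ℝ, c • (p v - p u1) + d • (p v - p u2) = 0 → c = 0 ∧ d = 0) :
    rankOf p F' + 2 ≤ rankOf p F := by
  set x1 := edgeVec p v u1 with hx1
  set x2 := edgeVec p v u2 with hx2
  set T := Submodule.span ℝ (edgeVecs p F') with hT
  set Bs := Submodule.span ℝ ({x1, x2} : Set (V → ℝ × ℝ)) with hBs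
  have hx1v : x1 v = p v - p u1 := edgeVec_self p v u1
  have hx2v : x2 v = p v - p u2 := edgeVec_self p v u2
  have hindx : LinearIndependent ℝ ![x1, x2] := by
    rw [LinearIndependent.pair_iff]
    intro c d hcd
    have hv := congrFun hcd v
    simp only [Pi.add_apply, Pi.smul_apply, Pi.zero_apply, hx1v, hx2v] at hv
    exact hind c d hv
  have hrange : ({x1, x2} : Set (V → ℝ × ℝ)) = Set.range ![x1, x2] := by
    ext z
    simp [Matrix.range_cons, Matrix.range_empty]
    tauto
  have hBsrank : Module.finrank ℝ Bs = 2 := by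
    rw [hBs, hrange, finrank_span_eq_card hindx, Fintype.card_fin]
  have hinf : T ⊓ Bs = ⊥ := by
    rw [eq_bot_iff]
    rintro x ⟨hxT, hxB⟩
    obtain ⟨c, d, hcd⟩ := Submodule.mem_span_pair.mp hxB
    have hxv : x v = 0 := apply_eq_zero_of_mem_span hF' hxT
    have hv : c • (p v - p u1) + d • (p v - p u2) = 0 := by
      have := congrFun hcd v
      simp only [Pi.add_apply, Pi.smul_apply, hx1v, hx2v] at this
      rw [this, hxv]
    obtain ⟨hc, hd⟩ := hind c d hv
    rw [Submodule.mem_bot, ← hcd, hc, hd, zero_smul, zero_smul, add_zero]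
  have hfr : Module.finrank ℝ ↥(T ⊔ Bs) = Module.finrank ℝ T + 2 := by
    have h := Submodule.finrank_sup_add_finrank_inf_eq T Bs
    rw [hinf, finrank_bot, hBsrank] at h
    omega
  have hle : T ⊔ Bs ≤ Submodule.span ℝ (edgeVecs p F) := by
    refine sup_le (Submodule.span_mono (edgeVecs_mono p hsub)) (Submodule.span_le.mpr ?_)
    rintro z (rfl | rfl)
    · exact Submodule.subset_span ⟨v, u1, h1, rfl⟩
    · exact Submodule.subset_span ⟨v, u2, h2, rfl⟩
  calc rankOf p F' + 2 = Module.finrank ℝ ↥(T ⊔ Bs) := hfr.symm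
    _ ≤ rankOf p F := Submodule.finrank_mono hle

lemma rank_boost_one {p : V → ℝ × ℝ} {F F' : Set (Sym2 V)} {v u1 : V}
    (hsub : F' ⊆ F) (hF' : ∀ e ∈ F', v ∉ e)
    (h1 : s(v, u1) ∈ F) (hne : p v ≠ p u1) :
    rankOf p F' + 1 ≤ rankOf p F := by
  set x1 := edgeVec p v u1 with hx1
  set T := Submodule.span ℝ (edgeVecs p F') with hT
  set Bs := Submodule.span ℝ ({x1} : Set (V → ℝ × ℝ)) with hBs
  have hx1v : x1 v = p v - p u1 := edgeVec_self p v u1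
  have hsubne : p v - p u1 ≠ 0 := sub_ne_zero.mpr hne
  have hx1ne : x1 ≠ 0 := by
    intro h
    exact hsubne (by rw [← hx1v, h]; rfl)
  have hBsrank : Module.finrank ℝ Bs = 1 := finrank_span_singleton hx1ne
  have hinf : T ⊓ Bs = ⊥ := by
    rw [eq_bot_iff]
    rintro x ⟨hxT, hxB⟩
    obtain ⟨c, hcd⟩ := Submodule.mem_span_singleton.mp hxB
    have hxv : x v = 0 := apply_eq_zero_of_mem_span hF' hxT
    have hv : c • (p v - p u1) = 0 := by
      have := congrFun hcd v
      simp only [Pi.smul_apply, hx1v] at this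
      rw [this, hxv]
    have hc : c = 0 := by
      rcases smul_eq_zero.mp hv with h | h
      · exact h
      · exact absurd h hsubne
    rw [Submodule.mem_bot, ← hcd, hc, zero_smul]
  have hfr : Module.finrank ℝ ↥(T ⊔ Bs) = Module.finrank ℝ T + 1 := by
    have h := Submodule.finrank_sup_add_finrank_inf_eq T Bs
    rw [hinf, finrank_bot, hBsrank] at h
    omega
  have hle : T ⊔ Bs ≤ Submodule.span ℝ (edgeVecs p F) := by
    refine sup_le (Submodule.span_mono (edgeVecs_mono p hsub)) (Submodule.span_le.mpr ?_)
    rintro z rfl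
    exact Submodule.subset_span ⟨v, u1, h1, rfl⟩
  calc rankOf p F' + 1 = Module.finrank ℝ ↥(T ⊔ Bs) := hfr.symm
    _ ≤ rankOf p F := Submodule.finrank_mono hle

end Boost

section Main

variable {V : Type*} [Fintype V]

lemma rankOf_update [DecidableEq V] (p : V → ℝ × ℝ) (v : V) (pv : ℝ × ℝ)
    {F' : Set (Sym2 V)} (hF' : ∀ e ∈ F', v ∉ e) :
    rankOf (Function.update p v pv) F' = rankOf p F' := by
  have key : edgeVecs (Function.update p v pv) F' = edgeVecs p F' := by
    ext x
    constructor
    · rintro ⟨i, j, hij, rfl⟩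
      have hi : i ≠ v := fun h => hF' _ hij (Sym2.mem_iff.mpr (Or.inl h.symm))
      have hj : j ≠ v := fun h => hF' _ hij (Sym2.mem_iff.mpr (Or.inr h.symm))
      exact ⟨i, j, hij, edgeVec_congr (Function.update_of_ne hi pv p)
        (Function.update_of_ne hj pv p)⟩
    · rintro ⟨i, j, hij, rfl⟩
      have hi : i ≠ v := fun h => hF' _ hij (Sym2.mem_iff.mpr (Or.inl h.symm))
      have hj : j ≠ v := fun h => hF' _ hij (Sym2.mem_iff.mpr (Or.inr h.symm))
      exact ⟨i, j, hij, (edgeVec_congr (Function.update_of_ne hi pv p)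
        (Function.update_of_ne hj pv p)).symm⟩
  unfold rankOf
  rw [key]

lemma genRank_lower (G : SimpleGraph V) (v : V) (Ev : Set (Sym2 V))
    (hEv : Ev = {e ∈ G.edgeSet | v ∈ e}) :
    genRankSet (G.edgeSet \ Ev) + min 2 Ev.ncard ≤ genRankSet G.edgeSet := by
  classical
  set E := G.edgeSet with hE
  set E' := E \ Ev with hE'
  have hF' : ∀ e ∈ E', v ∉ e := by
    rintro e ⟨heE, heNv⟩ hv
    exact heNv (by rw [hEv]; exact ⟨heE, hv⟩)
  have hsub : E' ⊆ E := Set.diff_subset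
  -- extracting a neighbor from an edge at v
  have hnb : ∀ e ∈ Ev, ∃ u, e = s(v, u) ∧ s(v, u) ∈ E ∧ v ≠ u := by
    intro e he
    rw [hEv] at he
    obtain ⟨heE, hve⟩ := he
    obtain ⟨u, rfl⟩ := Sym2.mem_iff_exists.mp hve
    exact ⟨u, rfl, heE, (G.mem_edgeSet.mp heE).ne⟩
  by_cases h0 : Ev.ncard = 0
  · have hEv0 : Ev = ∅ := (Set.ncard_eq_zero (Set.toFinite Ev)).mp h0
    have hEE' : E' = E := by rw [hE', hEv0, Set.diff_empty]
    rw [h0, hEE']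
    simp
  by_cases h1 : Ev.ncard = 1
  · -- one edge at v
    obtain ⟨e, he⟩ := Set.nonempty_of_ncard_ne_zero h0
    obtain ⟨u, rfl, heE, hvu⟩ := hnb e he
    obtain ⟨p0, hp0⟩ := exists_rankOf_eq_genRankSet E'
    set p := Function.update p0 v (p0 u + (1, 0)) with hp
    have hpu : p u = p0 u := Function.update_of_ne (Ne.symm hvu) _ _
    have hpv : p v = p0 u + (1, 0) := Function.update_self _ _ _
    have hne : p v ≠ p u := by
      rw [hpv, hpu]
      intro h
      have h1 := congrArg Prod.fst h
      simp [Prod.fst_add] at h1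
    have hb := rank_boost_one hsub hF' heE hne
    have hupd : rankOf p E' = rankOf p0 E' := rankOf_update p0 v _ hF'
    have hfin : rankOf p E ≤ genRankSet E := rankOf_le_genRankSet p E
    rw [h1]
    omega
  · -- at least two edges at v
    have h2 : 1 < Ev.ncard := by omega
    obtain ⟨e1, e2, he1, he2, hee⟩ := (Set.one_lt_ncard_iff (Set.toFinite Ev)).mp h2
    obtain ⟨u1, rfl, h1E, hvu1⟩ := hnb e1 he1
    obtain ⟨u2, rfl, h2E, hvu2⟩ := hnb e2 he2
    have hu12 : u1 ≠ u2 := fun h => hee (by rw [h])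
    obtain ⟨p1, hp1rank, hp1ne⟩ := exists_good_realization E' u1 u2 hu12
    set d : ℝ × ℝ := p1 u1 - p1 u2 with hd
    have hdne : d ≠ 0 := sub_ne_zero.mpr hp1ne
    set p := Function.update p1 v (p1 u1 + (-(d.2), d.1)) with hp
    have hpu1 : p u1 = p1 u1 := Function.update_of_ne (Ne.symm hvu1) _ _
    have hpu2 : p u2 = p1 u2 := Function.update_of_ne (Ne.symm hvu2) _ _
    have hpv : p v = p1 u1 + (-(d.2), d.1) := Function.update_self _ _ _
    have hw1 : p v - p u1 = (-(d.2), d.1) := by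
      rw [hpv, hpu1]; abel
    have hw2 : p v - p u2 = (d.1 - d.2, d.2 + d.1) := by
      rw [hpv, hpu2]
      have : p1 u1 - p1 u2 = d := rfl
      have hcomp : p1 u1 + (-(d.2), d.1) - p1 u2 = d + (-(d.2), d.1) := by
        rw [← this]; abel
      rw [hcomp, Prod.ext_iff]
      constructor <;> simp [Prod.fst_add, Prod.snd_add] <;> ring
    have hdsq : d.1 * d.1 + d.2 * d.2 ≠ 0 := by
      have : d.1 ≠ 0 ∨ d.2 ≠ 0 := by
        by_contra hcon
        push_neg at hcon
        exact hdne (Prod.ext hcon.1 hcon.2)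
      rcases this with h | h <;> nlinarith [mul_self_nonneg d.1, mul_self_nonneg d.2,
        mul_self_pos.mpr h]
    have hind : ∀ c e : ℝ, c • (p v - p u1) + e • (p v - p u2) = 0 → c = 0 ∧ e = 0 := by
      intro c e hce
      rw [hw1, hw2] at hce
      rw [Prod.ext_iff] at hce
      obtain ⟨hc1, hc2⟩ := hce
      simp only [Prod.fst_add, Prod.snd_add, Prod.smul_fst, Prod.smul_snd, smul_eq_mul,
        Prod.fst_zero, Prod.snd_zero] at hc1 hc2
      have he0 : e * (d.1 * d.1 + d.2 * d.2) = 0 := by linear_combination d.1 * hc1 + d.2 * hc2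
      have he : e = 0 := by
        rcases mul_eq_zero.mp he0 with h | h
        · exact h
        · exact absurd h hdsq
      rw [he] at hc1 hc2
      simp only [zero_mul, add_zero, mul_zero] at hc1 hc2
      have hc0 : c * (d.1 * d.1 + d.2 * d.2) = 0 := by linear_combination d.1 * hc2 - d.2 * hc1
      have hc : c = 0 := by
        rcases mul_eq_zero.mp hc0 with h | h
        · exact h
        · exact absurd h hdsq
      exact ⟨hc, he⟩
    have hb := rank_boost_two hsub hF' h1E h2E hind
    have hupd : rankOf p E' = rankOf p1 E' := rankOf_update p1 v _ hF'
    have hfin : rankOf p E ≤ genRankSet E := rankOf_le_genRankSet p E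
    have hmin : min 2 Ev.ncard = 2 := min_eq_left (by omega)
    omega

end Main

/-- Let `E_v` be the set of edges of `G` containing the vertex `v` and `E' = E \ E_v`.
If `|E_v| ≤ 2` then `s(E') = s(E)`; if `|E_v| ≥ 3` then
`s(E) - (|E_v| - 2) ≤ s(E') ≤ s(E)`. -/
theorem genStress_delete_vertex {V : Type*} [Fintype V] (G : SimpleGraph V) (v : V)
    (Ev : Set (Sym2 V)) (hEv : Ev = {e ∈ G.edgeSet | v ∈ e}) :
    (Ev.ncard ≤ 2 → genStressSet (G.edgeSet \ Ev) = genStressSet G.edgeSet) ∧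
    (3 ≤ Ev.ncard →
      genStressSet G.edgeSet - (Ev.ncard - 2) ≤ genStressSet (G.edgeSet \ Ev) ∧
      genStressSet (G.edgeSet \ Ev) ≤ genStressSet G.edgeSet) := by
  have hsubEv : Ev ⊆ G.edgeSet := by rw [hEv]; exact Set.sep_subset _ _
  have hunion : (G.edgeSet \ Ev) ∪ Ev = G.edgeSet := Set.diff_union_of_subset hsubEv
  have hncard : (G.edgeSet \ Ev).ncard + Ev.ncard = G.edgeSet.ncard :=
    Set.ncard_diff_add_ncard_of_subset hsubEv (Set.toFinite _)
  have hup : genRankSet G.edgeSet ≤ genRankSet (G.edgeSet \ Ev) + Ev.ncard := by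
    conv_lhs => rw [← hunion]
    exact genRankSet_union_le _ _
  have hlow := genRank_lower G v Ev hEv
  have hc1 : genRankSet (G.edgeSet \ Ev) ≤ (G.edgeSet \ Ev).ncard := genRankSet_le_ncard _
  have hc2 : genRankSet G.edgeSet ≤ G.edgeSet.ncard := genRankSet_le_ncard _
  unfold genStressSet
  constructor
  · intro hle2
    have hmin : min 2 Ev.ncard = Ev.ncard := min_eq_right hle2
    omega
  · intro hge3
    have hmin : min 2 Ev.ncard = 2 := min_eq_left (by omega)
    omega
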